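/- For m ≥ 5, let H = K_{m,m} \ E(C_{2m}) and W a resolving set of H. If a gap of W contains k vertices with 2 ≤ k ≤ 4, then each neighboring gap (sharing an end point in W) contains at most one vertex. -/

import Mathlib

/-- `W` resolves `G`: every vertex is determined by its distance vector to `W`. -/
def Resolves {V : Type*} (G : SimpleGraph V) (W : Set V) : Prop :=
  ∀ u v : V, (∀ w ∈ W, G.dist u w = G.dist v w) → u = v

/-- Metric dimension: minimum cardinality of a (finite) resolving set. -/
noncomputable def metricDim {V : Type*} (G : SimpleGraph V) : ℕ :=
  sInf {k | ∃ W : Set V, W.Finite ∧ W.ncard = k ∧ Resolves G W}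
/-- `K_{m,m}` minus the Hamiltonian cycle `x₁ y₁ x₂ y₂ … x_m y_m x₁` (0-indexed:
cycle edges are `xᵢ yᵢ` and `yᵢ x_{i+1 mod m}`). -/
def cycGraph (m : ℕ) : SimpleGraph (Fin m ⊕ Fin m) where
  Adj u v := match u, v with
    | Sum.inl i, Sum.inr j => j ≠ i ∧ (i : ℕ) ≠ ((j : ℕ) + 1) % m
    | Sum.inr j, Sum.inl i => j ≠ i ∧ (i : ℕ) ≠ ((j : ℕ) + 1) % m
    | _, _ => False
  symm := ⟨by rintro (i|i) (j|j) h <;> exact h⟩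
  loopless := ⟨by rintro (i|i) h <;> exact h⟩

/-- Position `k` (taken mod `2m`) along the Hamiltonian cycle
`x₁ y₁ x₂ y₂ …`: even positions `2i ↦ xᵢ`, odd positions `2i+1 ↦ yᵢ`. -/
def cyc (m : ℕ) [NeZero m] (k : ℕ) : Fin m ⊕ Fin m :=
  if (k % (2 * m)) % 2 = 0 then
    Sum.inl ⟨k % (2 * m) / 2, by
      have hm : 0 < m := Nat.pos_of_ne_zero (NeZero.ne m)
      have h : k % (2 * m) < 2 * m := Nat.mod_lt _ (by omega)
      exact Nat.div_lt_of_lt_mul (by omega)⟩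
  else
    Sum.inr ⟨k % (2 * m) / 2, by
      have hm : 0 < m := Nat.pos_of_ne_zero (NeZero.ne m)
      have h : k % (2 * m) < 2 * m := Nat.mod_lt _ (by omega)
      exact Nat.div_lt_of_lt_mul (by omega)⟩

/-- `W` has a gap of exactly `L` vertices starting at cycle position `s`:
the positions `s` and `s+L+1` are in `W` and the `L` positions strictly between are not. -/
def IsGap (m : ℕ) [NeZero m] (W : Set (Fin m ⊕ Fin m)) (s L : ℕ) : Prop :=
  cyc m s ∈ W ∧ cyc m (s + L + 1) ∈ W ∧ ∀ t, 1 ≤ t → t ≤ L → cyc m (s + t) ∉ W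

section Aux

open SimpleGraph Sum

variable {m : ℕ} [NeZero m]

lemma mpos : 0 < m := Nat.pos_of_ne_zero (NeZero.ne m)

lemma halfLt (a : ℕ) : a % (2 * m) / 2 < m := by
  have h : a % (2 * m) < 2 * m := Nat.mod_lt _ (by have := @mpos m _; omega)
  omega

lemma cyc_even {a : ℕ} (h : a % 2 = 0) : cyc m a = Sum.inl ⟨a % (2*m)/2, halfLt a⟩ := by
  unfold cyc
  rw [Nat.mod_mod_of_dvd a ⟨m, rfl⟩, if_pos h]

lemma cyc_odd {a : ℕ} (h : a % 2 = 1) : cyc m a = Sum.inr ⟨a % (2*m)/2, halfLt a⟩ := by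
  unfold cyc
  rw [Nat.mod_mod_of_dvd a ⟨m, rfl⟩, if_neg (by omega)]

lemma cyc_eq_iff {a b : ℕ} : cyc m a = cyc m b ↔ a % (2*m) = b % (2*m) := by
  constructor
  · intro h
    have ha2 : a % (2*m) % 2 = a % 2 := Nat.mod_mod_of_dvd a ⟨m, rfl⟩
    have hb2 : b % (2*m) % 2 = b % 2 := Nat.mod_mod_of_dvd b ⟨m, rfl⟩
    rcases Nat.mod_two_eq_zero_or_one a with ha | ha <;> rcases Nat.mod_two_eq_zero_or_one b with hb | hb
    · rw [cyc_even ha, cyc_even hb] at h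
      simp only [Sum.inl.injEq, Fin.mk.injEq] at h
      omega
    · rw [cyc_even ha, cyc_odd hb] at h; simp at h
    · rw [cyc_odd ha, cyc_even hb] at h; simp at h
    · rw [cyc_odd ha, cyc_odd hb] at h
      simp only [Sum.inr.injEq, Fin.mk.injEq] at h
      omega
  · intro h
    simp only [cyc, h]

lemma cyc_surj (v : Fin m ⊕ Fin m) : ∃ p, cyc m p = v := by
  have hm := @mpos m _
  rcases v with i | i
  · refine ⟨2 * (i : ℕ), ?_⟩
    rw [cyc_even (by omega)]
    have h1 : 2 * (i : ℕ) % (2 * m) = 2 * (i : ℕ) := Nat.mod_eq_of_lt (by have := i.isLt; omega)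
    simp only [Sum.inl.injEq]
    ext
    simp only [h1]
    omega
  · refine ⟨2 * (i : ℕ) + 1, ?_⟩
    rw [cyc_odd (by omega)]
    have h1 : (2 * (i : ℕ) + 1) % (2 * m) = 2 * (i : ℕ) + 1 :=
      Nat.mod_eq_of_lt (by have := i.isLt; omega)
    simp only [Sum.inr.injEq]
    ext
    simp only [h1]
    omega

lemma adj_ll (i j : Fin m) : ¬ (cycGraph m).Adj (Sum.inl i) (Sum.inl j) := fun h => h

lemma adj_rr (i j : Fin m) : ¬ (cycGraph m).Adj (Sum.inr i) (Sum.inr j) := fun h => h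

lemma adj_lr (i j : Fin m) :
    (cycGraph m).Adj (Sum.inl i) (Sum.inr j) ↔ j ≠ i ∧ (i : ℕ) ≠ ((j : ℕ) + 1) % m := Iff.rfl

lemma adj_rl (i j : Fin m) :
    (cycGraph m).Adj (Sum.inr j) (Sum.inl i) ↔ j ≠ i ∧ (i : ℕ) ≠ ((j : ℕ) + 1) % m := Iff.rfl

lemma adj_cyc_aux (a b : ℕ) (ha : a % 2 = 0) (hb : b % 2 = 1) :
    (cycGraph m).Adj (cyc m a) (cyc m b) ↔
      (a + 1) % (2*m) ≠ b % (2*m) ∧ (b + 1) % (2*m) ≠ a % (2*m) := by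
  have hm := @mpos m _
  rw [cyc_even ha, cyc_odd hb, adj_lr]
  have hA2 : a % (2*m) % 2 = a % 2 := Nat.mod_mod_of_dvd a ⟨m, rfl⟩
  have hB2 : b % (2*m) % 2 = b % 2 := Nat.mod_mod_of_dvd b ⟨m, rfl⟩
  have hAlt : a % (2*m) < 2*m := Nat.mod_lt _ (by omega)
  have hBlt : b % (2*m) < 2*m := Nat.mod_lt _ (by omega)
  set A := a % (2*m) with hA
  set B := b % (2*m) with hB
  have ea : (a+1) % (2*m) = (A+1) % (2*m) :=
    (Nat.mod_modEq a (2*m)).symm.add_right 1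
  have eb : (b+1) % (2*m) = (B+1) % (2*m) :=
    (Nat.mod_modEq b (2*m)).symm.add_right 1
  have ea' : (A+1) % (2*m) = A + 1 := Nat.mod_eq_of_lt (by omega)
  rw [ea, eb, ea', Ne, Ne, Ne, Fin.mk.injEq, ← Ne]
  simp only [ne_eq]
  rcases Nat.lt_or_ge (B+1) (2*m) with hc | hc
  · have eb' : (B+1) % (2*m) = B + 1 := Nat.mod_eq_of_lt hc
    have hBm : B / 2 + 1 < m := by omega
    have e1 : (B/2 + 1) % m = B/2 + 1 := Nat.mod_eq_of_lt hBm
    rw [eb', e1]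
    constructor
    · rintro ⟨h1, h2⟩; omega
    · rintro ⟨h1, h2⟩; omega
  · have hBeq : B = 2*m - 1 := by omega
    have eb' : (B+1) % (2*m) = 0 := by
      have : B + 1 = 2*m := by omega
      rw [this, Nat.mod_self]
    have e1 : (B/2 + 1) % m = 0 := by
      have : B/2 + 1 = m := by omega
      rw [this, Nat.mod_self]
    rw [eb', e1]
    constructor
    · rintro ⟨h1, h2⟩; omega
    · rintro ⟨h1, h2⟩; omega

lemma adj_cyc_iff (a b : ℕ) :
    (cycGraph m).Adj (cyc m a) (cyc m b) ↔
      a % 2 ≠ b % 2 ∧ (a + 1) % (2*m) ≠ b % (2*m) ∧ (b + 1) % (2*m) ≠ a % (2*m) := by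
  rcases Nat.mod_two_eq_zero_or_one a with ha | ha <;> rcases Nat.mod_two_eq_zero_or_one b with hb | hb
  · rw [cyc_even ha, cyc_even hb]
    constructor
    · intro h; exact absurd h (adj_ll _ _)
    · rintro ⟨h, -⟩; exact absurd (show a % 2 = b % 2 by omega) h
  · rw [adj_cyc_aux a b ha hb]
    constructor
    · rintro ⟨h1, h2⟩; exact ⟨by omega, h1, h2⟩
    · rintro ⟨-, h1, h2⟩; exact ⟨h1, h2⟩
  · rw [(cycGraph m).adj_comm, adj_cyc_aux b a hb ha]
    constructor
    · rintro ⟨h1, h2⟩; exact ⟨by omega, h2, h1⟩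
    · rintro ⟨-, h1, h2⟩; exact ⟨h2, h1⟩
  · rw [cyc_odd ha, cyc_odd hb]
    constructor
    · intro h; exact absurd h (adj_rr _ _)
    · rintro ⟨h, -⟩; exact absurd (show a % 2 = b % 2 by omega) h

/-- pick an element of `Fin m` avoiding 4 given values, for `m ≥ 5` -/
lemma avoid4 (hm : 5 ≤ m) (a b c d : Fin m) :
    ∃ l : Fin m, l ≠ a ∧ l ≠ b ∧ l ≠ c ∧ l ≠ d := by
  obtain ⟨l, hl⟩ : ∃ l : Fin m, l ∉ ({a, b, c, d} : Finset (Fin m)) := by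
    by_contra h
    push_neg at h
    have hsub : (Finset.univ : Finset (Fin m)) ⊆ {a, b, c, d} := fun x _ => h x
    have h1 : (Finset.univ : Finset (Fin m)).card ≤ ({a, b, c, d} : Finset (Fin m)).card :=
      Finset.card_le_card hsub
    have h2 : ({a, b, c, d} : Finset (Fin m)).card ≤ 4 := by
      apply le_trans (Finset.card_insert_le _ _)
      have := Finset.card_insert_le b ({c, d} : Finset (Fin m))
      have := Finset.card_insert_le c ({d} : Finset (Fin m))
      simp only [Finset.card_singleton] at *
      omega
    rw [Finset.card_univ, Fintype.card_fin] at h1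
    omega
  simp only [Finset.mem_insert, Finset.mem_singleton, not_or] at hl
  exact ⟨l, hl.1, hl.2.1, hl.2.2.1, hl.2.2.2⟩

/-- the predecessor of `i` on the cycle of `Fin m` -/
def pre (i : Fin m) : Fin m := ⟨((i : ℕ) + (m - 1)) % m, Nat.mod_lt _ mpos⟩

lemma pre_spec {i l : Fin m} (h : l ≠ pre i) : (i : ℕ) ≠ ((l : ℕ) + 1) % m := by
  intro heq
  apply h
  have hi := i.isLt
  have hl := l.isLt
  ext
  show (l : ℕ) = ((i : ℕ) + (m - 1)) % m
  rcases Nat.lt_or_ge ((l : ℕ) + 1) m with hc | hc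
  · rw [Nat.mod_eq_of_lt hc] at heq
    have : (i : ℕ) + (m - 1) = (l : ℕ) + m := by omega
    rw [this, Nat.add_mod_right, Nat.mod_eq_of_lt hl]
  · have hlm : (l : ℕ) + 1 = m := by omega
    rw [hlm, Nat.mod_self] at heq
    rw [heq]
    simp only [Nat.zero_add]
    rw [Nat.mod_eq_of_lt (by omega)]
    omega

/-- the successor of `i` on the cycle of `Fin m` -/
def suc (i : Fin m) : Fin m := ⟨((i : ℕ) + 1) % m, Nat.mod_lt _ mpos⟩

lemma suc_spec {i l : Fin m} (h : l ≠ suc i) : (l : ℕ) ≠ ((i : ℕ) + 1) % m :=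
  fun heq => h (Fin.ext heq)

lemma dist_ll (hm : 5 ≤ m) {i j : Fin m} (hij : i ≠ j) :
    (cycGraph m).dist (Sum.inl i) (Sum.inl j) = 2 := by
  obtain ⟨l, h1, h2, h3, h4⟩ := avoid4 hm i j (pre i) (pre j)
  have a1 : (cycGraph m).Adj (Sum.inl i) (Sum.inr l) := ⟨h1, pre_spec h3⟩
  have a2 : (cycGraph m).Adj (Sum.inr l) (Sum.inl j) := ⟨h2, pre_spec h4⟩
  let w : (cycGraph m).Walk (Sum.inl i) (Sum.inl j) :=
    SimpleGraph.Walk.cons a1 (SimpleGraph.Walk.cons a2 SimpleGraph.Walk.nil)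
  have hle : (cycGraph m).dist (Sum.inl i) (Sum.inl j) ≤ 2 := by
    have := SimpleGraph.dist_le w
    simpa [w] using this
  have hne1 : (cycGraph m).dist (Sum.inl i) (Sum.inl j) ≠ 1 := by
    intro h
    exact adj_ll i j (SimpleGraph.dist_eq_one_iff_adj.mp h)
  have hpos : 0 < (cycGraph m).dist (Sum.inl i) (Sum.inl j) :=
    SimpleGraph.Reachable.pos_dist_of_ne ⟨w⟩ (by simpa using hij)
  omega

lemma dist_rr (hm : 5 ≤ m) {i j : Fin m} (hij : i ≠ j) :
    (cycGraph m).dist (Sum.inr i) (Sum.inr j) = 2 := by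
  obtain ⟨l, h1, h2, h3, h4⟩ := avoid4 hm (suc i) (suc j) i j
  have a1 : (cycGraph m).Adj (Sum.inr i) (Sum.inl l) := ⟨(h3.symm : _), suc_spec h1⟩
  have a2 : (cycGraph m).Adj (Sum.inl l) (Sum.inr j) := ⟨h4.symm, suc_spec h2⟩
  let w : (cycGraph m).Walk (Sum.inr i) (Sum.inr j) :=
    SimpleGraph.Walk.cons a1 (SimpleGraph.Walk.cons a2 SimpleGraph.Walk.nil)
  have hle : (cycGraph m).dist (Sum.inr i) (Sum.inr j) ≤ 2 := by
    have := SimpleGraph.dist_le w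
    simpa [w] using this
  have hne1 : (cycGraph m).dist (Sum.inr i) (Sum.inr j) ≠ 1 := by
    intro h
    exact adj_rr i j (SimpleGraph.dist_eq_one_iff_adj.mp h)
  have hpos : 0 < (cycGraph m).dist (Sum.inr i) (Sum.inr j) :=
    SimpleGraph.Reachable.pos_dist_of_ne ⟨w⟩ (by simpa using hij)
  omega

lemma dist_same_side (hm : 5 ≤ m) {a b : ℕ} (hpar : a % 2 = b % 2)
    (hne : cyc m a ≠ cyc m b) : (cycGraph m).dist (cyc m a) (cyc m b) = 2 := by
  rcases Nat.mod_two_eq_zero_or_one a with ha | ha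
  · have hb : b % 2 = 0 := by omega
    rw [cyc_even ha, cyc_even hb] at hne ⊢
    apply dist_ll hm
    intro h
    exact hne (by rw [h])
  · have hb : b % 2 = 1 := by omega
    rw [cyc_odd ha, cyc_odd hb] at hne ⊢
    apply dist_rr hm
    intro h
    exact hne (by rw [h])

/-- walks in the bipartite graph flip sides each step -/
lemma walk_parity {u v : Fin m ⊕ Fin m} (p : (cycGraph m).Walk u v) :
    (u.isLeft = v.isLeft) ↔ p.length % 2 = 0 := by
  induction p with
  | nil => simp
  | @cons a b c h q ih =>
    have hab : a.isLeft = !b.isLeft := by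
      rcases a with x | x <;> rcases b with y | y
      · exact absurd h (adj_ll x y)
      · simp
      · simp
      · exact absurd h (adj_rr x y)
    rw [SimpleGraph.Walk.length_cons, hab]
    rcases hbc : b.isLeft <;> rcases hcc : c.isLeft <;>
      simp [hbc, hcc] at ih ⊢ <;> omega

lemma dist_lr3 (hm : 5 ≤ m) {i j : Fin m} (hna : ¬ (cycGraph m).Adj (Sum.inl i) (Sum.inr j)) :
    (cycGraph m).dist (Sum.inl i) (Sum.inr j) = 3 := by
  obtain ⟨l, h1, -, h3, -⟩ := avoid4 hm i (pre i) (pre i) (pre i)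
  obtain ⟨r, h5, h6, h7, h8⟩ := avoid4 hm l (suc l) j (suc j)
  have a1 : (cycGraph m).Adj (Sum.inl i) (Sum.inr l) := ⟨h1, pre_spec h3⟩
  have a2 : (cycGraph m).Adj (Sum.inr l) (Sum.inl r) := ⟨h5.symm, suc_spec h6⟩
  have a3 : (cycGraph m).Adj (Sum.inl r) (Sum.inr j) := ⟨h7.symm, suc_spec h8⟩
  let w : (cycGraph m).Walk (Sum.inl i) (Sum.inr j) :=
    SimpleGraph.Walk.cons a1 (SimpleGraph.Walk.cons a2
      (SimpleGraph.Walk.cons a3 SimpleGraph.Walk.nil))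
  have hle : (cycGraph m).dist (Sum.inl i) (Sum.inr j) ≤ 3 := by
    have := SimpleGraph.dist_le w
    simpa [w] using this
  have hne1 : (cycGraph m).dist (Sum.inl i) (Sum.inr j) ≠ 1 := by
    intro h
    exact hna (SimpleGraph.dist_eq_one_iff_adj.mp h)
  have hpos : 0 < (cycGraph m).dist (Sum.inl i) (Sum.inr j) :=
    SimpleGraph.Reachable.pos_dist_of_ne ⟨w⟩ (by simp)
  have hodd : (cycGraph m).dist (Sum.inl i) (Sum.inr j) % 2 = 1 := by
    obtain ⟨p, hp⟩ := SimpleGraph.Reachable.exists_walk_length_eq_dist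
      (⟨w⟩ : (cycGraph m).Reachable (Sum.inl i) (Sum.inr j))
    have h2 := walk_parity p
    simp only [Sum.isLeft_inl, Sum.isLeft_inr, Bool.true_eq_false, false_iff] at h2
    omega
  omega

lemma dist_cross3 (hm : 5 ≤ m) {a b : ℕ} (hpar : a % 2 ≠ b % 2)
    (hna : ¬ (cycGraph m).Adj (cyc m a) (cyc m b)) :
    (cycGraph m).dist (cyc m a) (cyc m b) = 3 := by
  rcases Nat.mod_two_eq_zero_or_one a with ha | ha
  · have hb : b % 2 = 1 := by omega
    rw [cyc_even ha, cyc_odd hb] at hna ⊢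
    exact dist_lr3 hm hna
  · have hb : b % 2 = 0 := by omega
    rw [cyc_odd ha, cyc_even hb] at hna ⊢
    rw [SimpleGraph.dist_comm]
    exact dist_lr3 hm (fun h => hna h.symm)

lemma key (hm : 5 ≤ m) (W : Set (Fin m ⊕ Fin m)) (hW : Resolves (cycGraph m) W) (q : ℕ)
    (h0 : cyc m q ∉ W) (h1 : cyc m (q+1) ∉ W) (h3 : cyc m (q+3) ∉ W)
    (h4 : cyc m (q+4) ∉ W) : False := by
  have hm2 : 0 < 2 * m := by omega
  have hne : cyc m (q+1) ≠ cyc m (q+3) := by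
    rw [Ne, cyc_eq_iff]
    intro h
    have hd : 2 * m ∣ (q+3) - (q+1) := (Nat.modEq_iff_dvd' (by omega)).mp h
    have : (q+3) - (q+1) = 2 := by omega
    rw [this] at hd
    have := Nat.le_of_dvd (by omega) hd
    omega
  apply hne
  apply hW
  intro w hw
  obtain ⟨p, rfl⟩ := cyc_surj w
  have hpq : p % (2*m) ≠ q % (2*m) := by
    intro h
    exact h0 (cyc_eq_iff.mpr h.symm ▸ hw)
  have hpq4 : p % (2*m) ≠ (q+4) % (2*m) := by
    intro h
    exact h4 (cyc_eq_iff.mpr h.symm ▸ hw)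
  by_cases hpar : p % 2 = q % 2
  · -- cross case
    have cancel : ∀ x y : ℕ, (x+1) % (2*m) = (y+1) % (2*m) ↔ x % (2*m) = y % (2*m) := by
      intro x y
      constructor
      · intro h
        exact Nat.ModEq.add_right_cancel' 1 h
      · intro h
        exact Nat.ModEq.add_right 1 h
    have hAu : (cycGraph m).Adj (cyc m (q+1)) (cyc m p) ↔
        (q+2) % (2*m) ≠ p % (2*m) ∧ (p+1) % (2*m) ≠ (q+1) % (2*m) := by
      rw [adj_cyc_iff]
      have : q + 1 + 1 = q + 2 := by omega
      rw [this]
      constructor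
      · rintro ⟨-, h1, h2⟩; exact ⟨h1, h2⟩
      · rintro ⟨h1, h2⟩; exact ⟨by omega, h1, h2⟩
    have hAv : (cycGraph m).Adj (cyc m (q+3)) (cyc m p) ↔
        (q+4) % (2*m) ≠ p % (2*m) ∧ (p+1) % (2*m) ≠ (q+3) % (2*m) := by
      rw [adj_cyc_iff]
      have : q + 3 + 1 = q + 4 := by omega
      rw [this]
      constructor
      · rintro ⟨-, h1, h2⟩; exact ⟨h1, h2⟩
      · rintro ⟨h1, h2⟩; exact ⟨by omega, h1, h2⟩
    have hiff : (cycGraph m).Adj (cyc m (q+1)) (cyc m p) ↔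
        (cycGraph m).Adj (cyc m (q+3)) (cyc m p) := by
      rw [hAu, hAv]
      have e1 : (p+1) % (2*m) = (q+1) % (2*m) ↔ p % (2*m) = q % (2*m) := cancel p q
      have e2 : (p+1) % (2*m) = (q+3) % (2*m) ↔ p % (2*m) = (q+2) % (2*m) := by
        have h : q + 3 = (q + 2) + 1 := by omega
        rw [h]; exact cancel p (q+2)
      constructor
      · rintro ⟨h1, h2'⟩
        refine ⟨fun h => hpq4 h.symm, fun h => h1 ?_⟩
        exact (e2.mp h).symm
      · rintro ⟨-, h2'⟩
        exact ⟨fun h => h2' (e2.mpr h.symm), fun h => hpq (e1.mp h)⟩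
    by_cases hadj : (cycGraph m).Adj (cyc m (q+1)) (cyc m p)
    · rw [SimpleGraph.dist_eq_one_iff_adj.mpr hadj,
        SimpleGraph.dist_eq_one_iff_adj.mpr (hiff.mp hadj)]
    · rw [dist_cross3 hm (by omega) hadj,
        dist_cross3 hm (by omega) (fun h => hadj (hiff.mpr h))]
  · -- same-side case
    have hu : cyc m (q+1) ≠ cyc m p := fun h => h1 (h ▸ hw)
    have hv : cyc m (q+3) ≠ cyc m p := fun h => h3 (h ▸ hw)
    rw [dist_same_side hm (by omega) hu, dist_same_side hm (by omega) hv]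

end Aux

/-- for `m ≥ 5`, if a gap of a resolving set `W` of
`K_{m,m} \ E(C_{2m})` contains `k` vertices with `2 ≤ k ≤ 4`, then each of its
two neighboring gaps contains at most one vertex. -/
theorem stmt9 (m : ℕ) [NeZero m] (hm : 5 ≤ m) (W : Set (Fin m ⊕ Fin m))
    (hW : Resolves (cycGraph m) W) (s k : ℕ)
    (hg : IsGap m W s k) (hk2 : 2 ≤ k) (hk4 : k ≤ 4) :
    (∀ L, IsGap m W (s + k + 1) L → L ≤ 1) ∧
    (∀ s' L, IsGap m W s' L → (s' + L + 1) % (2 * m) = s % (2 * m) → L ≤ 1) := by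
  obtain ⟨-, -, hgap⟩ := hg
  constructor
  · intro L hL
    by_contra hL1
    push_neg at hL1
    obtain ⟨-, -, hLgap⟩ := hL
    apply key hm W hW (s + k - 1)
    · have e : s + k - 1 = s + (k - 1) := by omega
      rw [e]
      exact hgap (k-1) (by omega) (by omega)
    · have e : s + k - 1 + 1 = s + k := by omega
      rw [e]
      exact hgap k (by omega) le_rfl
    · have e : s + k - 1 + 3 = s + k + 1 + 1 := by omega
      rw [e]
      exact hLgap 1 le_rfl (by omega)
    · have e : s + k - 1 + 4 = s + k + 1 + 2 := by omega
      rw [e]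
      exact hLgap 2 (by omega) (by omega)
  · intro s' L hL hmod
    by_contra hL1
    push_neg at hL1
    obtain ⟨-, -, hLgap⟩ := hL
    apply key hm W hW (s' + L - 1)
    · have e : s' + L - 1 = s' + (L - 1) := by omega
      rw [e]
      exact hLgap (L-1) (by omega) (by omega)
    · have e : s' + L - 1 + 1 = s' + L := by omega
      rw [e]
      exact hLgap L (by omega) le_rfl
    · have e : s' + L - 1 + 3 = (s' + L + 1) + 1 := by omega
      rw [e]
      have : cyc m ((s' + L + 1) + 1) = cyc m (s + 1) :=
        cyc_eq_iff.mpr (Nat.ModEq.add_right 1 hmod)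
      rw [this]
      exact hgap 1 le_rfl (by omega)
    · have e : s' + L - 1 + 4 = (s' + L + 1) + 2 := by omega
      rw [e]
      have : cyc m ((s' + L + 1) + 2) = cyc m (s + 2) :=
        cyc_eq_iff.mpr (Nat.ModEq.add_right 2 hmod)
      rw [this]
      exact hgap 2 (by omega) (by omega)
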